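/- Suppose ρμ₂ ≤ μ₁ (this covers all −1 < ρ < 1 when μ₁ = μ₂, and ρ ≤ μ₁/μ₂ when μ₁ < μ₂). Then g(t,s) = g₃(t,s) for all (t,s) ∈ (0,∞)²; that is, the constrained infimum defining g is attained at the corner point (1+μ₁t, 1+μ₂s). -/

import Mathlib

open Matrix

/-- The covariance matrix of `(X₁(t), X₂(s))`. -/
noncomputable def covM (ρ t s : ℝ) : Matrix (Fin 2) (Fin 2) ℝ :=
  !![t, ρ * min t s; ρ * min t s, s]

/-- The quadratic form `(x,y) Σ_{ts}⁻¹ (x,y)ᵀ`. -/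
noncomputable def quadF (ρ t s x y : ℝ) : ℝ :=
  dotProduct ![x, y] ((covM ρ t s)⁻¹.mulVec ![x, y])

/-- `g(t,s) = inf{ (x,y) Σ_{ts}⁻¹ (x,y)ᵀ : x ≥ 1+μ₁t, y ≥ 1+μ₂s }`. -/
noncomputable def gFun (μ₁ μ₂ ρ t s : ℝ) : ℝ :=
  sInf { q : ℝ | ∃ x y : ℝ, 1 + μ₁ * t ≤ x ∧ 1 + μ₂ * s ≤ y ∧ q = quadF ρ t s x y }

/-- `g₃(t,s)`: the quadratic form at the corner point `(1+μ₁t, 1+μ₂s)`. -/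
noncomputable def g3Fun (μ₁ μ₂ ρ t s : ℝ) : ℝ :=
  quadF ρ t s (1 + μ₁ * t) (1 + μ₂ * s)

lemma quadF_eq (ρ t s x y : ℝ) :
    quadF ρ t s x y =
      (s * x^2 - 2 * (ρ * min t s) * x * y + t * y^2) / (t * s - (ρ * min t s)^2) := by
  rw [quadF, Matrix.inv_def]
  simp only [covM, Matrix.adjugate_fin_two_of, Matrix.det_fin_two_of, Ring.inverse_eq_inv',
    Matrix.smul_of, Matrix.mulVec, dotProduct, Fin.sum_univ_two,
    Matrix.cons_val_zero, Matrix.cons_val_one, Matrix.head_cons, Matrix.of_apply,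
    Matrix.cons_val', Matrix.head_fin_const, smul_eq_mul, Matrix.smul_cons, Matrix.smul_empty]
  rw [div_eq_mul_inv]
  ring

set_option maxHeartbeats 1000000 in
/-- The corner point minimizes the quadratic form over the quadrant. -/
lemma quad_min (μ₁ μ₂ ρ : ℝ) (hμ1 : 0 < μ₁) (hμ12 : μ₁ ≤ μ₂)
    (hρl : -1 < ρ) (hρu : ρ < 1) (hρμ : ρ * μ₂ ≤ μ₁)
    (t s : ℝ) (ht : 0 < t) (hs : 0 < s) (x y : ℝ)
    (hx : 1 + μ₁ * t ≤ x) (hy : 1 + μ₂ * s ≤ y) :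
    quadF ρ t s (1 + μ₁ * t) (1 + μ₂ * s) ≤ quadF ρ t s x y := by
  set c : ℝ := ρ * min t s with hc
  set a : ℝ := 1 + μ₁ * t with ha
  set b : ℝ := 1 + μ₂ * s with hb
  have hμ2 : 0 < μ₂ := lt_of_lt_of_le hμ1 hμ12
  have ha0 : 0 < a := by positivity
  have hb0 : 0 < b := by positivity
  have hρ2 : ρ ^ 2 < 1 := by nlinarith
  have hD : 0 < t * s - c ^ 2 := by
    rcases le_total t s with h | h
    · rw [hc, min_eq_left h]
      nlinarith [mul_le_mul_of_nonneg_left (mul_le_mul_of_nonneg_left h ht.le) (sq_nonneg ρ),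
        mul_lt_mul_of_pos_right hρ2 (mul_pos ht hs)]
    · rw [hc, min_eq_right h]
      nlinarith [mul_le_mul_of_nonneg_left (mul_le_mul_of_nonneg_left h hs.le) (sq_nonneg ρ),
        mul_lt_mul_of_pos_right hρ2 (mul_pos ht hs)]
  have h1 : c * b ≤ s * a := by
    rcases le_total t s with h | h
    · rw [hc, min_eq_left h, ha, hb]
      nlinarith [mul_le_mul_of_nonneg_right hρμ (mul_pos ht hs).le,
        mul_le_mul_of_nonneg_right hρu.le ht.le]
    · rw [hc, min_eq_right h, ha, hb]
      nlinarith [mul_le_mul_of_nonneg_right hρμ (mul_pos hs hs).le,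
        mul_le_mul_of_nonneg_right hρu.le hs.le,
        mul_le_mul_of_nonneg_left h hμ1.le]
  have h2 : c * a ≤ t * b := by
    rcases le_total t s with h | h
    · rw [hc, min_eq_left h, ha, hb]
      nlinarith [mul_le_mul_of_nonneg_right hρu.le (mul_pos ht ht).le,
        mul_le_mul_of_nonneg_right hρu.le ht.le,
        mul_le_mul_of_nonneg_left h hμ1.le,
        mul_le_mul_of_nonneg_right hμ12 hs.le,
        mul_le_mul_of_nonneg_right hρu.le (mul_pos hμ1 ht).le]
    · rw [hc, min_eq_right h, ha, hb]
      nlinarith [mul_le_mul_of_nonneg_right hρu.le hs.le,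
        mul_le_mul_of_nonneg_right hρu.le (mul_pos (mul_pos hμ1 hs) ht).le,
        mul_le_mul_of_nonneg_right hμ12 (mul_pos hs ht).le]
  have hu : 0 ≤ x - a := sub_nonneg.2 hx
  have hv : 0 ≤ y - b := sub_nonneg.2 hy
  have hquad : 0 ≤ s * (x - a) ^ 2 - 2 * c * (x - a) * (y - b) + t * (y - b) ^ 2 := by
    have := sq_nonneg (s * (x - a) - c * (y - b))
    have := mul_nonneg hD.le (sq_nonneg (y - b))
    nlinarith
  have hnum : s * a ^ 2 - 2 * c * a * b + t * b ^ 2 ≤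
      s * x ^ 2 - 2 * c * x * y + t * y ^ 2 := by
    nlinarith [mul_nonneg hu (sub_nonneg.2 h1), mul_nonneg hv (sub_nonneg.2 h2), hquad]
  rw [quadF_eq, quadF_eq, ← hc]
  rw [div_le_div_iff₀ hD hD]
  exact mul_le_mul_of_nonneg_right hnum hD.le

theorem stmt8 (μ₁ μ₂ ρ : ℝ) (hμ1 : 0 < μ₁) (hμ12 : μ₁ ≤ μ₂)
    (hρl : -1 < ρ) (hρu : ρ < 1) (hρμ : ρ * μ₂ ≤ μ₁) :
    ∀ t s : ℝ, 0 < t → 0 < s → gFun μ₁ μ₂ ρ t s = g3Fun μ₁ μ₂ ρ t s := by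
  intro t s ht hs
  have hmem : g3Fun μ₁ μ₂ ρ t s ∈
      { q : ℝ | ∃ x y : ℝ, 1 + μ₁ * t ≤ x ∧ 1 + μ₂ * s ≤ y ∧ q = quadF ρ t s x y } :=
    ⟨1 + μ₁ * t, 1 + μ₂ * s, le_refl _, le_refl _, rfl⟩
  have hlb : ∀ q ∈ { q : ℝ | ∃ x y : ℝ, 1 + μ₁ * t ≤ x ∧ 1 + μ₂ * s ≤ y ∧
      q = quadF ρ t s x y }, g3Fun μ₁ μ₂ ρ t s ≤ q := by
    rintro q ⟨x, y, hx, hy, rfl⟩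
    exact quad_min μ₁ μ₂ ρ hμ1 hμ12 hρl hρu hρμ t s ht hs x y hx hy
  refine le_antisymm (csInf_le ⟨g3Fun μ₁ μ₂ ρ t s, hlb⟩ hmem) (le_csInf ⟨_, hmem⟩ hlb)
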